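/- arXiv:2603.13550 — 4 statements merged into one kernel-verified Lean document; each statement's English description precedes it below -/
import Mathlib

section
/- Let E be a finite-dimensional vector space over a finite field with a rank function ρ satisfying the q-matroid axioms (ρ(0)=0, 0 ≤ ρ(X) ≤ dim X, monotonicity, and submodularity ρ(X+Y)+ρ(X∩Y) ≤ ρ(X)+ρ(Y)). Then any linear basis β of E contains a subset spanning a subspace B with ρ(B) = dim B = ρ(E), i.e. β contains a linear basis of a basis of the q-matroid. -/
/-- In a q-matroid (E, ρ), any linear basis of E contains a linear basis
of a basis of the q-matroid, i.e. a subset spanning a subspace B with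
ρ(B) = dim B = ρ(E). -/
theorem stmt0 {𝔽 E : Type*} [Field 𝔽] [Fintype 𝔽] [AddCommGroup E] [Module 𝔽 E]
    [FiniteDimensional 𝔽 E]
    (ρ : Submodule 𝔽 E → ℕ)
    (hρ0 : ρ ⊥ = 0)
    (hρdim : ∀ X : Submodule 𝔽 E, ρ X ≤ Module.finrank 𝔽 X)
    (hρmono : ∀ X Y : Submodule 𝔽 E, X ≤ Y → ρ X ≤ ρ Y)
    (hρsub : ∀ X Y : Submodule 𝔽 E, ρ (X ⊔ Y) + ρ (X ⊓ Y) ≤ ρ X + ρ Y)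
    (β : Finset E)
    (hind : LinearIndependent 𝔽 (fun b : {x // x ∈ β} => (b : E)))
    (hspan : Submodule.span 𝔽 (β : Set E) = ⊤) :
    ∃ γ ⊆ β, ρ (Submodule.span 𝔽 (γ : Set E)) = Module.finrank 𝔽 (Submodule.span 𝔽 (γ : Set E))
      ∧ ρ (Submodule.span 𝔽 (γ : Set E)) = ρ ⊤ := by
  classical
  have hindset : LinearIndependent 𝔽 (fun x : (β : Set E) => x.1) := by simpa using hind
  -- finrank of span of any subset of β equals its cardinality
  have hdim : ∀ γ : Finset E, γ ⊆ β →
      Module.finrank 𝔽 (Submodule.span 𝔽 (γ : Set E)) = γ.card := by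
    intro γ hγ
    exact finrank_span_finset_eq_card (LinearIndepOn.mono (hindset : LinearIndepOn 𝔽 id (β : Set E)) (Finset.coe_subset.2 hγ))
  -- candidate sets
  set P : Finset E → Prop := fun γ => γ ⊆ β ∧ ρ (Submodule.span 𝔽 (γ : Set E)) = γ.card with hP
  have hPempty : P ∅ := by
    refine ⟨Finset.empty_subset _, ?_⟩
    simp [hρ0]
  obtain ⟨γ, hγP, hγmax⟩ := Finset.exists_max_image (β.powerset.filter P) Finset.card
    ⟨∅, by simp only [Finset.mem_filter, Finset.mem_powerset]; exact ⟨hPempty.1, hPempty⟩⟩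
  rw [Finset.mem_filter, Finset.mem_powerset] at hγP
  obtain ⟨hγβ, hγsub, hγρ⟩ := hγP
  set X := Submodule.span 𝔽 (γ : Set E) with hX
  refine ⟨γ, hγβ, ?_, ?_⟩
  · rw [hγρ, hdim γ hγβ]
  -- step: ρ(X ⊔ ⟨b⟩) = ρ X for each b ∈ β
  have hstep : ∀ b ∈ β, ρ (X ⊔ Submodule.span 𝔽 {b}) = ρ X := by
    intro b hb
    by_cases hbγ : b ∈ γ
    · have : Submodule.span 𝔽 {b} ≤ X := by
        rw [Submodule.span_le, Set.singleton_subset_iff]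
        exact Submodule.subset_span (by exact_mod_cast hbγ)
      rw [sup_eq_left.2 this]
    · have hins : X ⊔ Submodule.span 𝔽 {b} = Submodule.span 𝔽 ((insert b γ : Finset E) : Set E) := by
        rw [Finset.coe_insert, Submodule.span_insert, hX, sup_comm]
      have hsubβ : insert b γ ⊆ β := Finset.insert_subset hb hγβ
      have hcard : (insert b γ).card = γ.card + 1 := Finset.card_insert_of_notMem hbγ
      have hle : ρ (Submodule.span 𝔽 ((insert b γ : Finset E) : Set E)) ≤ γ.card + 1 := by
        calc ρ _ ≤ Module.finrank 𝔽 (Submodule.span 𝔽 ((insert b γ : Finset E) : Set E)) :=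
              hρdim _
          _ = γ.card + 1 := by rw [hdim _ hsubβ, hcard]
      have hne : ρ (Submodule.span 𝔽 ((insert b γ : Finset E) : Set E)) ≠ γ.card + 1 := by
        intro heq
        have : (insert b γ).card ≤ γ.card := hγmax _ (by
          rw [Finset.mem_filter, Finset.mem_powerset]
          exact ⟨hsubβ, hsubβ, by rw [heq, hcard]⟩)
        omega
      have h1 : ρ (Submodule.span 𝔽 ((insert b γ : Finset E) : Set E)) ≤ γ.card := by omega
      have h2 : ρ X ≤ ρ (X ⊔ Submodule.span 𝔽 {b}) := hρmono _ _ le_sup_left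
      rw [hins] at h2
      rw [hins]
      have h3 : ρ X = γ.card := hγρ
      omega
  -- induction: adjoining any subset S of β doesn't change ρ
  have hmain : ∀ S : Finset E, S ⊆ β → ρ (X ⊔ Submodule.span 𝔽 (S : Set E)) = ρ X := by
    intro S
    induction S using Finset.induction_on with
    | empty => intro _; simp
    | insert b S hbS ih =>
      intro hSβ
      have hb : b ∈ β := hSβ (Finset.mem_insert_self b S)
      have hS : S ⊆ β := fun x hx => hSβ (Finset.mem_insert_of_mem hx)
      have hA := ih hS
      have hB := hstep b hb
      set A := X ⊔ Submodule.span 𝔽 (S : Set E)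
      set B := X ⊔ Submodule.span 𝔽 ({b} : Set E)
      have hsup : X ⊔ Submodule.span 𝔽 ((insert b S : Finset E) : Set E) = A ⊔ B := by
        rw [Finset.coe_insert, Submodule.span_insert]
        simp only [A, B]
        rw [sup_sup_sup_comm, sup_idem, sup_comm (Submodule.span 𝔽 {b})]
      have hsubm := hρsub A B
      have hXle : ρ X ≤ ρ (A ⊓ B) := hρmono _ _ (le_inf le_sup_left le_sup_left)
      have hge : ρ X ≤ ρ (A ⊔ B) := hρmono _ _ (le_sup_left.trans le_sup_left)
      rw [hsup]
      omega
  have htop := hmain β le_rfl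
  rw [hspan, sup_top_eq] at htop
  exact htop.symm
end

section
/- Let M = ([n], r) be an avoidance transversal matroid with presentation S = (S_1,…,S_k), and let φ(M) be the q-matroid on F_q^n whose independent spaces are the subspaces X ≤ F_q^n all of whose linear bases admit an avoidance transversal of X = (φ(S_1),…,φ(S_k)). If I ⊆ [n] is independent in M, then the coordinate subspace φ(I) = span{e_i : i ∈ I} is independent in φ(M). -/
open Submodule

/-- `X` has an avoidance transversal of the family `A`: an injection `f` from `X`
into the index type with `x ∉ A (f x)` for all `x ∈ X`. -/
def AvoidsT {α ι : Type*} (A : ι → Set α) (X : Finset α) : Prop :=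
  ∃ f : {x // x ∈ X} → ι, Function.Injective f ∧ ∀ x : {x // x ∈ X}, (x : α) ∉ A (f x)

/-- The rank function of the avoidance transversal matroid with presentation `A`:
the maximum size of a subset of `X` admitting an avoidance transversal. -/
noncomputable def atRank {α ι : Type*} (A : ι → Set α) (X : Finset α) : ℕ :=
  sSup {m | ∃ Y : Finset α, Y ⊆ X ∧ AvoidsT A Y ∧ Y.card = m}

/-- `W` is a partial q-transversal of the family of subspaces `X`: every linear
basis of `W` admits an avoidance transversal of `X`. These are the independent
spaces of the transversal q-matroid with presentation `X`. -/
def IsPartialQT {𝔽 V ι : Type*} [Field 𝔽] [AddCommGroup V] [Module 𝔽 V]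
    (X : ι → Submodule 𝔽 V) (W : Submodule 𝔽 V) : Prop :=
  ∀ β : Finset V, (β : Set V) ⊆ (W : Set V) →
    LinearIndependent 𝔽 (fun b : {x // x ∈ β} => (b : V)) →
    span 𝔽 (β : Set V) = W →
    AvoidsT (fun i => ((X i : Submodule 𝔽 V) : Set V)) β

/-- The rank function of the transversal q-matroid with presentation `X`. -/
noncomputable def qtRank {𝔽 V ι : Type*} [Field 𝔽] [AddCommGroup V] [Module 𝔽 V]
    (X : ι → Submodule 𝔽 V) (W : Submodule 𝔽 V) : ℕ :=
  sSup {d | ∃ U : Submodule 𝔽 V, U ≤ W ∧ IsPartialQT X U ∧ Module.finrank 𝔽 U = d}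

/-- The coordinate subspace `φ(S) = span {e_i : i ∈ S}` of `𝔽^n`. -/
def coordSub (𝔽 : Type*) [Field 𝔽] {n : ℕ} (S : Set (Fin n)) : Submodule 𝔽 (Fin n → 𝔽) :=
  span 𝔽 ((fun i => Pi.single i (1 : 𝔽)) '' S)

/-- The support of a vector: the set of indices of its nonzero coordinates. -/
def suppS {𝔽 : Type*} [Field 𝔽] {n : ℕ} (v : Fin n → 𝔽) : Set (Fin n) := {j | v j ≠ 0}

section aux
variable {𝔽 : Type*} [Field 𝔽] {n : ℕ}

/-- The submodule of vectors vanishing off `T`. -/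
def zeroOff (𝔽 : Type*) [Field 𝔽] {n : ℕ} (T : Set (Fin n)) :
    Submodule 𝔽 (Fin n → 𝔽) where
  carrier := {v | ∀ j, j ∉ T → v j = 0}
  add_mem' := by intro a b ha hb j hj; simp [Pi.add_apply, ha j hj, hb j hj]
  zero_mem' := by intro j hj; rfl
  smul_mem' := by intro c a ha j hj; simp [Pi.smul_apply, ha j hj]

lemma coordSub_le_zeroOff (T : Set (Fin n)) : coordSub 𝔽 T ≤ zeroOff 𝔽 T := by
  rw [coordSub, span_le]
  rintro _ ⟨i, hi, rfl⟩ j hj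
  exact Pi.single_eq_of_ne (by rintro rfl; exact hj hi) 1

lemma suppS_subset_of_mem {T : Set (Fin n)} {v : Fin n → 𝔽}
    (hv : v ∈ coordSub 𝔽 T) : suppS v ⊆ T := by
  intro j hj
  by_contra hjT
  exact hj (coordSub_le_zeroOff T hv j hjT)

lemma mem_coordSub_of_suppS {T : Set (Fin n)} {v : Fin n → 𝔽}
    (hv : suppS v ⊆ T) : v ∈ coordSub 𝔽 T := by
  classical
  have hrepr : v = ∑ j : Fin n, Pi.single j (v j) := by
    rw [Finset.univ_sum_single]
  rw [hrepr]
  refine sum_mem fun j _ => ?_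
  by_cases hj : v j = 0
  · simp [hj]
  · have : (Pi.single j (v j) : Fin n → 𝔽) = v j • (Pi.single j (1 : 𝔽) : Fin n → 𝔽) := by
      ext l; by_cases h : l = j <;> simp [Pi.single_apply, h]
    rw [this]
    exact smul_mem _ _ (subset_span ⟨j, hv hj, rfl⟩)

end aux

/-- if `I` is independent in the avoidance transversal matroid with
presentation `(S_1,…,S_k)`, then the coordinate subspace `φ(I)` is independent in
the transversal q-matroid with presentation `(φ(S_1),…,φ(S_k))`. -/
theorem stmt5 {𝔽 : Type*} [Field 𝔽] [Fintype 𝔽] {n k : ℕ}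
    (S : Fin k → Set (Fin n)) (I : Finset (Fin n))
    (hI : AvoidsT S I) :
    IsPartialQT (fun i => coordSub 𝔽 (S i)) (coordSub 𝔽 (I : Set (Fin n))) := by
  classical
  obtain ⟨f, hfinj, hfav⟩ := hI
  intro β hβW hβli _hspan
  -- supports as finsets
  set t : {x // x ∈ β} → Finset (Fin n) :=
    fun b => Finset.univ.filter (fun j => (b : Fin n → 𝔽) j ≠ 0) with ht
  have htsupp : ∀ b : {x // x ∈ β}, ((t b : Finset (Fin n)) : Set (Fin n)) = suppS (b : Fin n → 𝔽) := by
    intro b; ext j; simp [ht, suppS]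
  -- Hall condition
  have hall : ∀ s : Finset {x // x ∈ β}, s.card ≤ (s.biUnion t).card := by
    intro s
    set U : Finset (Fin n) := s.biUnion t with hU
    -- the vectors of s are linearly independent
    have hli : LinearIndependent 𝔽 (fun b : {x // x ∈ s} => ((b : {x // x ∈ β}) : Fin n → 𝔽)) := by
      exact hβli.comp (fun b : {x // x ∈ s} => (b : {x // x ∈ β})) Subtype.val_injective
    have h1 : span 𝔽 (Set.range (fun b : {x // x ∈ s} => ((b : {x // x ∈ β}) : Fin n → 𝔽)))
        ≤ coordSub 𝔽 (U : Set (Fin n)) := by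
      rw [span_le]
      rintro _ ⟨b, rfl⟩
      refine mem_coordSub_of_suppS ?_
      intro j hj
      have : j ∈ t (b : {x // x ∈ β}) := by
        simpa [ht, suppS] using hj
      exact Finset.mem_coe.2 (Finset.mem_biUnion.2 ⟨b, b.2, this⟩)
    have h2 : coordSub 𝔽 (U : Set (Fin n)) = span 𝔽 ((U.image (fun j => Pi.single j (1:𝔽)) : Finset (Fin n → 𝔽)) : Set (Fin n → 𝔽)) := by
      rw [coordSub]; congr 1; simp [Finset.coe_image]
    calc s.card = Module.finrank 𝔽 (span 𝔽 (Set.range (fun b : {x // x ∈ s} => ((b : {x // x ∈ β}) : Fin n → 𝔽)))) := by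
          rw [finrank_span_eq_card hli, Fintype.card_coe]
      _ ≤ Module.finrank 𝔽 (coordSub 𝔽 (U : Set (Fin n))) := Submodule.finrank_mono h1
      _ ≤ (U.image (fun j => Pi.single j (1:𝔽))).card := by
          rw [h2]; exact finrank_span_finset_le_card _
      _ ≤ U.card := Finset.card_image_le
  obtain ⟨g, hginj, hgmem⟩ := (Finset.all_card_le_biUnion_card_iff_exists_injective t).1 hall
  -- g b is in the support of b, hence in I
  have hsupp : ∀ b : {x // x ∈ β}, (b : Fin n → 𝔽) (g b) ≠ 0 := by
    intro b; have := hgmem b; simpa [ht] using this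
  have hgI : ∀ b : {x // x ∈ β}, g b ∈ I := by
    intro b
    have hmem : (b : Fin n → 𝔽) ∈ coordSub 𝔽 (I : Set (Fin n)) := hβW b.2
    exact suppS_subset_of_mem hmem (hsupp b)
  refine ⟨fun b => f ⟨g b, hgI b⟩, ?_, ?_⟩
  · intro a b hab
    exact hginj (congrArg Subtype.val (hfinj hab))
  · intro b hb
    have h1 : suppS (b : Fin n → 𝔽) ⊆ S (f ⟨g b, hgI b⟩) := suppS_subset_of_mem hb
    exact hfav ⟨g b, hgI b⟩ (h1 (hsupp b))
end

section
/- Let M = ([n], r) be an avoidance transversal matroid with presentation (S_1,…,S_k) and let φ(M) be the transversal q-matroid on F_q^n with presentation (φ(S_1),…,φ(S_k)). If F ⊆ [n] is a flat of M, then φ(F) = span{e_i : i ∈ F} is a flat of φ(M), i.e. for every v ∈ F_q^n ∖ φ(F), ρ(φ(F) + span(v)) > ρ(φ(F)), where ρ is the rank function of φ(M). -/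
open Submodule

section Aux

variable {𝔽 : Type*} [Field 𝔽] {n k : ℕ}

/-- submodule of functions supported in `T` -/
def suppSub (𝔽 : Type*) [Field 𝔽] {n : ℕ} (T : Set (Fin n)) : Submodule 𝔽 (Fin n → 𝔽) where
  carrier := {v | ∀ i ∉ T, v i = 0}
  add_mem' := fun ha hb i hi => by simp [ha i hi, hb i hi]
  zero_mem' := fun i _ => rfl
  smul_mem' := fun c v hv i hi => by simp [hv i hi]

lemma coordSub_eq_suppSub (T : Set (Fin n)) : coordSub 𝔽 T = suppSub 𝔽 T := by
  classical
  apply le_antisymm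
  · rw [coordSub, span_le]
    rintro - ⟨i, hi, rfl⟩
    intro i' hi'
    have : i' ≠ i := fun h => hi' (h ▸ hi)
    simp [Pi.single_apply, this]
  · intro v hv
    have hrepr : v = ∑ i : Fin n, Pi.single i (v i) := (Finset.univ_sum_single v).symm
    rw [hrepr]
    apply Submodule.sum_mem
    intro i _
    by_cases hi : i ∈ T
    · have : (Pi.single i (v i) : Fin n → 𝔽) = v i • (Pi.single i (1:𝔽) : Fin n → 𝔽) := by
        ext j; simp [Pi.single_apply]
      rw [this]
      exact smul_mem _ _ (subset_span ⟨i, hi, rfl⟩)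
    · have : v i = 0 := hv i hi
      simp [this]

lemma mem_coordSub_iff {T : Set (Fin n)} {v : Fin n → 𝔽} :
    v ∈ coordSub 𝔽 T ↔ ∀ i ∉ T, v i = 0 := by
  rw [coordSub_eq_suppSub]; rfl

lemma coordSub_mono {A B : Set (Fin n)} (h : A ⊆ B) : coordSub 𝔽 A ≤ coordSub 𝔽 B :=
  span_mono (Set.image_mono h)

lemma coordSub_inf (A B : Set (Fin n)) :
    coordSub 𝔽 A ⊓ coordSub 𝔽 B = coordSub 𝔽 (A ∩ B) := by
  simp only [coordSub_eq_suppSub]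
  ext v
  constructor
  · rintro ⟨h1, h2⟩ i hi
    rcases not_and_or.mp (fun h : i ∈ A ∧ i ∈ B => hi ⟨h.1, h.2⟩) with h | h
    exacts [h1 i h, h2 i h]
  · intro h
    exact ⟨fun i hi => h i (fun hh => hi hh.1), fun i hi => h i (fun hh => hi hh.2)⟩

lemma finrank_coordSub (Y : Finset (Fin n)) :
    Module.finrank 𝔽 (coordSub 𝔽 (Y : Set (Fin n))) = Y.card := by
  classical
  have himg : (fun i => Pi.single i (1:𝔽)) '' (Y : Set (Fin n))
      = Set.range (fun i : {x // x ∈ Y} => (Pi.single (i : Fin n) (1:𝔽) : Fin n → 𝔽)) := by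
    ext w
    constructor
    · rintro ⟨i, hi, rfl⟩; exact ⟨⟨i, hi⟩, rfl⟩
    · rintro ⟨i, rfl⟩; exact ⟨i, i.2, rfl⟩
  have hli : LinearIndependent 𝔽
      (fun i : {x // x ∈ Y} => (Pi.single (i : Fin n) (1:𝔽) : Fin n → 𝔽)) := by
    have h := (Pi.basisFun 𝔽 (Fin n)).linearIndependent
    have h2 := h.comp (fun i : {x // x ∈ Y} => (i : Fin n)) Subtype.val_injective
    convert h2 using 1
    funext i
    simp [Pi.basisFun_apply]
  rw [coordSub, himg, finrank_span_eq_card hli, Fintype.card_coe]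

lemma avoidsT_empty {α ι : Type*} (A : ι → Set α) : AvoidsT A (∅ : Finset α) :=
  ⟨fun x => absurd x.2 (Finset.notMem_empty _),
   fun a => absurd a.2 (Finset.notMem_empty _),
   fun x => absurd x.2 (Finset.notMem_empty _)⟩

lemma isPartialQT_bot {V ι : Type*} [AddCommGroup V] [Module 𝔽 V] (X : ι → Submodule 𝔽 V) :
    IsPartialQT X (⊥ : Submodule 𝔽 V) := by
  intro β hsub hli _
  have hβ : β = ∅ := by
    by_contra h
    obtain ⟨x, hx⟩ := Finset.nonempty_iff_ne_empty.mpr h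
    have hx0 : x = 0 := by simpa using hsub hx
    exact hli.ne_zero ⟨x, hx⟩ (by simpa using hx0)
  subst hβ
  exact avoidsT_empty _

lemma card_le_of_inj_subtype {α γ : Type*} [DecidableEq γ] (Z : Finset α) (N : Finset γ)
    (ψ : {x // x ∈ Z} → γ) (hinj : Function.Injective ψ) (hmem : ∀ x, ψ x ∈ N) :
    Z.card ≤ N.card := by
  classical
  have h1 : Z.card = (Finset.univ.image ψ).card := by
    rw [Finset.card_image_of_injective _ hinj, Finset.card_univ, Fintype.card_coe]
  rw [h1]
  refine Finset.card_le_card (fun i hi => ?_)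
  obtain ⟨x, -, rfl⟩ := Finset.mem_image.mp hi
  exact hmem x

lemma avoid_count {S : Fin k → Set (Fin n)} {Y₀ Z : Finset (Fin n)} (hZY : Z ⊆ Y₀)
    (h : AvoidsT S Y₀) (N : Finset (Fin k)) (hN : ∀ j ∈ Z, ∀ i, j ∉ S i → i ∈ N) :
    Z.card ≤ N.card := by
  obtain ⟨g, ginj, gav⟩ := h
  refine card_le_of_inj_subtype Z N (fun x => g ⟨(x : Fin n), hZY x.2⟩) ?_ ?_
  · intro a b hab
    have := ginj hab
    exact Subtype.ext (Subtype.mk_eq_mk.mp this)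
  · intro x
    exact hN (x : Fin n) x.2 _ (gav ⟨(x : Fin n), hZY x.2⟩)

end Aux
section Part1
variable {𝔽 : Type*} [Field 𝔽] {n k : ℕ}

lemma isPQT_sup [DecidableEq (Fin n)] (S : Fin k → Set (Fin n)) {Y' : Finset (Fin n)} {j : Fin n}
    (hjY' : j ∉ Y') (hav : AvoidsT S (insert j Y')) (v : Fin n → 𝔽) (hvj : v j ≠ 0) :
    IsPartialQT (fun i => coordSub 𝔽 (S i)) (coordSub 𝔽 (Y' : Set (Fin n)) ⊔ span 𝔽 {v}) := by
  classical
  intro β hβW hβli hβspan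
  set W := coordSub 𝔽 (Y' : Set (Fin n)) ⊔ span 𝔽 {v} with hW
  set B : (Fin n → 𝔽) → Finset (Fin k) :=
    fun b => Finset.univ.filter (fun i => b ∉ coordSub 𝔽 (S i)) with hB
  have hall : ∀ s : Finset {x // x ∈ β}, s.card ≤ (s.biUnion (fun x => B x.1)).card := by
    intro s
    set T : Finset (Fin n → 𝔽) := s.image Subtype.val with hT
    have hscard : s.card = T.card := (Finset.card_image_of_injective s Subtype.val_injective).symm
    have hTβ : ∀ b ∈ T, b ∈ β := by
      intro b hb; obtain ⟨x, _, rfl⟩ := Finset.mem_image.mp hb; exact x.2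
    have hTW : (T : Set (Fin n → 𝔽)) ⊆ (W : Set (Fin n → 𝔽)) := fun b hb => hβW (hTβ b hb)
    have hβset : LinearIndependent 𝔽 (fun x : (β : Set (Fin n → 𝔽)) => (x.1 : Fin n → 𝔽)) := hβli
    have hTli : LinearIndependent 𝔽 (fun x : (T : Set (Fin n → 𝔽)) => (x.1 : Fin n → 𝔽)) :=
      LinearIndepOn.mono (v := id) hβset (fun b hb => hTβ b hb)
    set UT := span 𝔽 (T : Set (Fin n → 𝔽)) with hUT
    have hTcard : T.card = Module.finrank 𝔽 UT := (finrank_span_finset_eq_card hTli).symm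
    set ZT : Finset (Fin n) := Finset.univ.filter (fun i0 => ∃ b ∈ T, b i0 ≠ 0) with hZT
    have hUZT : UT ≤ coordSub 𝔽 (ZT : Set (Fin n)) := by
      rw [hUT, span_le]
      intro b hb
      rw [SetLike.mem_coe, mem_coordSub_iff]
      intro i0 hi0
      by_contra hne
      exact hi0 (by rw [hZT]; simp only [Finset.coe_filter, Finset.mem_coe, Finset.mem_univ,
        true_and, Set.mem_setOf_eq]; exact ⟨b, hb, hne⟩)
    set D := UT ⊓ coordSub 𝔽 (Y' : Set (Fin n)) with hD
    have hDle : D ≤ coordSub 𝔽 ((ZT ∩ Y' : Finset (Fin n)) : Set (Fin n)) := by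
      rw [Finset.coe_inter, ← coordSub_inf]
      exact le_inf (le_trans inf_le_left hUZT) inf_le_right
    have hDrank : Module.finrank 𝔽 D ≤ (ZT ∩ Y').card := by
      calc Module.finrank 𝔽 D
          ≤ Module.finrank 𝔽 (coordSub 𝔽 ((ZT ∩ Y' : Finset (Fin n)) : Set (Fin n))) :=
            Submodule.finrank_mono hDle
        _ = (ZT ∩ Y').card := finrank_coordSub _
    have key : ∀ Z : Finset (Fin n), Z ⊆ insert j Y' → (∀ x ∈ Z, x ∈ ZT) →
        T.card ≤ Z.card → s.card ≤ (s.biUnion (fun x => B x.1)).card := by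
      intro Z hZY hZZT hcard
      rw [hscard]
      refine le_trans hcard (avoid_count hZY hav _ ?_)
      intro j'' hj'' i hiS
      have hj''ZT := hZZT j'' hj''
      rw [hZT, Finset.mem_filter] at hj''ZT
      obtain ⟨b, hbT, hbne⟩ := hj''ZT.2
      obtain ⟨x, hxs, rfl⟩ := Finset.mem_image.mp hbT
      refine Finset.mem_biUnion.mpr ⟨x, hxs, ?_⟩
      rw [hB]
      simp only [Finset.mem_filter, Finset.mem_univ, true_and]
      rw [mem_coordSub_iff]
      push_neg
      exact ⟨j'', hiS, hbne⟩
    by_cases hc : j ∈ ZT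
    · have hUTW : UT ≤ W := by rw [hUT, span_le]; exact hTW
      have heq := Submodule.finrank_sup_add_finrank_inf_eq UT (coordSub 𝔽 (Y' : Set (Fin n)))
      have hvne : v ≠ 0 := fun h => hvj (by rw [h]; rfl)
      have hWrank : Module.finrank 𝔽 W ≤ Y'.card + 1 := by
        rw [hW]
        calc Module.finrank 𝔽 ↥(coordSub 𝔽 (Y' : Set (Fin n)) ⊔ span 𝔽 {v})
            ≤ Module.finrank 𝔽 (coordSub 𝔽 (Y' : Set (Fin n))) + Module.finrank 𝔽 (span 𝔽 {v}) :=
              Submodule.finrank_add_le_finrank_add_finrank _ _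
          _ = Y'.card + 1 := by rw [finrank_coordSub, finrank_span_singleton hvne]
      have hsup : Module.finrank 𝔽 ↥(UT ⊔ coordSub 𝔽 (Y' : Set (Fin n))) ≤ Y'.card + 1 :=
        le_trans (Submodule.finrank_mono (sup_le hUTW le_sup_left)) hWrank
      have hYrank := finrank_coordSub (𝔽 := 𝔽) Y'
      have hUTrank : Module.finrank 𝔽 UT ≤ Module.finrank 𝔽 D + 1 := by
        rw [hD] at *; omega
      have hjZY' : j ∉ ZT ∩ Y' := fun h => hjY' (Finset.mem_inter.mp h).2
      refine key (insert j (ZT ∩ Y')) ?_ ?_ ?_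
      · intro x hx
        rcases Finset.mem_insert.mp hx with rfl | hx
        · exact Finset.mem_insert_self _ _
        · exact Finset.mem_insert_of_mem (Finset.mem_inter.mp hx).2
      · intro x hx
        rcases Finset.mem_insert.mp hx with rfl | hx
        · exact hc
        · exact (Finset.mem_inter.mp hx).1
      · rw [Finset.card_insert_of_notMem hjZY']
        omega
    · have hTY' : ∀ b ∈ T, b ∈ coordSub 𝔽 (Y' : Set (Fin n)) := by
        intro b hb
        have hbW : b ∈ W := hTW hb
        rw [hW] at hbW
        obtain ⟨u, hu, w, hw, rfl⟩ := mem_sup.mp hbW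
        obtain ⟨c, rfl⟩ := mem_span_singleton.mp hw
        have hbj : (u + c • v) j = 0 := by
          by_contra hne
          exact hc (by rw [hZT]; exact Finset.mem_filter.mpr ⟨Finset.mem_univ _, ⟨_, hb, hne⟩⟩)
        have huj : u j = 0 := (mem_coordSub_iff.mp hu) j (by simpa using hjY')
        have hcv : c * v j = 0 := by simpa [huj] using hbj
        have hc0 : c = 0 := by
          rcases mul_eq_zero.mp hcv with h | h
          · exact h
          · exact absurd h hvj
        simpa [hc0] using hu
      have hUTD : UT ≤ D := le_inf le_rfl (by rw [hUT, span_le]; intro b hb; exact hTY' b hb)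
      refine key (ZT ∩ Y') ?_ (fun x hx => (Finset.mem_inter.mp hx).1) ?_
      · exact fun x hx => Finset.mem_insert_of_mem (Finset.mem_inter.mp hx).2
      · calc T.card = Module.finrank 𝔽 UT := hTcard
          _ ≤ Module.finrank 𝔽 D := Submodule.finrank_mono hUTD
          _ ≤ (ZT ∩ Y').card := hDrank
  obtain ⟨f, finj, fmem⟩ :=
    (Finset.all_card_le_biUnion_card_iff_exists_injective (fun x : {x // x ∈ β} => B x.1)).mp hall
  refine ⟨f, finj, fun x => ?_⟩
  have := fmem x
  rw [hB] at this
  simp only [Finset.mem_filter, Finset.mem_univ, true_and] at this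
  exact this

end Part1
section Part2
variable {𝔽 : Type*} [Field 𝔽] {n k : ℕ}

lemma exists_avoid_of_PQT (S : Fin k → Set (Fin n)) (F : Finset (Fin n))
    (U : Submodule 𝔽 (Fin n → 𝔽)) (hUF : U ≤ coordSub 𝔽 (F : Set (Fin n)))
    (hPQT : IsPartialQT (fun i => coordSub 𝔽 (S i)) U) :
    ∃ Y : Finset (Fin n), Y ⊆ F ∧ AvoidsT S Y ∧ Module.finrank 𝔽 U ≤ Y.card := by
  classical
  set d := Module.finrank 𝔽 U with hd
  have hdF : d ≤ F.card := by
    rw [hd, ← finrank_coordSub (𝔽 := 𝔽) F]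
    exact Submodule.finrank_mono hUF
  set m := F.card - d with hm
  set t : {x // x ∈ F} → Finset (Fin k ⊕ Fin m) := fun x =>
    ((Finset.univ.filter (fun i => (x : Fin n) ∉ S i)).image Sum.inl)
      ∪ ((Finset.univ : Finset (Fin m)).image Sum.inr) with ht
  have hall : ∀ s : Finset {x // x ∈ F}, s.card ≤ (s.biUnion t).card := by
    intro s
    rcases s.eq_empty_or_nonempty with rfl | ⟨x₀, hx₀⟩
    · simp
    set Z : Finset (Fin n) := s.image Subtype.val with hZ
    have hZF : Z ⊆ F := by
      intro a ha; obtain ⟨x, _, rfl⟩ := Finset.mem_image.mp ha; exact x.2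
    set NZ : Finset (Fin k) := Finset.univ.filter (fun i => ∃ j'' ∈ Z, j'' ∉ S i) with hNZ
    have key : d ≤ (F.card - Z.card) + NZ.card := by
      set D := U ⊓ coordSub 𝔽 (Z : Set (Fin n)) with hD
      have h1 : d + Z.card ≤ F.card + Module.finrank 𝔽 D := by
        have heq := Submodule.finrank_sup_add_finrank_inf_eq U (coordSub 𝔽 (Z : Set (Fin n)))
        have hle : Module.finrank 𝔽 ↥(U ⊔ coordSub 𝔽 (Z : Set (Fin n))) ≤ F.card := by
          rw [← finrank_coordSub (𝔽 := 𝔽) F]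
          exact Submodule.finrank_mono
            (sup_le hUF (coordSub_mono (by exact_mod_cast hZF)))
        have h2 := finrank_coordSub (𝔽 := 𝔽) Z
        rw [hD]
        omega
      have h2 : Module.finrank 𝔽 D ≤ NZ.card := by
        obtain ⟨b, hbD, hbspan, hbli⟩ := exists_linearIndependent 𝔽 (D : Set (Fin n → 𝔽))
        rw [span_eq] at hbspan
        have hbU : b ⊆ (U : Set (Fin n → 𝔽)) :=
          hbD.trans (fun x hx => (inf_le_left : D ≤ U) hx)
        obtain ⟨c, hcU, hbc, hUc, hcli⟩ := exists_linearIndepOn_id_extension hbli hbU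
        have hcfin : c.Finite := hcli.setFinite
        have hbfin : b.Finite := hcfin.subset hbc
        set β := hcfin.toFinset with hβ
        have hβc : (β : Set (Fin n → 𝔽)) = c := hcfin.coe_toFinset
        have hspanβ : span 𝔽 (β : Set (Fin n → 𝔽)) = U := by
          rw [hβc]
          exact le_antisymm (span_le.mpr hcU) (fun x hx => hUc hx)
        have hβli : LinearIndependent 𝔽 (fun x : {x // x ∈ β} => (x : Fin n → 𝔽)) := by
          have : LinearIndependent 𝔽 (fun x : (β : Set (Fin n → 𝔽)) => (x.1 : Fin n → 𝔽)) := by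
            rw [hβc]; exact hcli
          exact this
        obtain ⟨f, finj, fav⟩ := hPQT β (by rw [hβc]; exact hcU) hβli hspanβ
        set bfin := hbfin.toFinset with hbfin'
        have hbβ : ∀ w ∈ bfin, w ∈ β := by
          intro w hw
          rw [hβ, Set.Finite.mem_toFinset]
          exact hbc (hbfin.mem_toFinset.mp hw)
        have hcount : bfin.card ≤ NZ.card := by
          refine card_le_of_inj_subtype bfin NZ
            (fun w => f ⟨(w : Fin n → 𝔽), hbβ w.1 w.2⟩) ?_ ?_
          · intro a b' hab
            have := finj hab
            exact Subtype.ext (Subtype.mk_eq_mk.mp this)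
          · intro w
            have hw := fav ⟨(w : Fin n → 𝔽), hbβ w.1 w.2⟩
            have hwD : (w : Fin n → 𝔽) ∈ D := by
              rw [← hbspan]
              exact subset_span (hbfin.mem_toFinset.mp w.2)
            have hwZ : ∀ i0 ∉ (Z : Set (Fin n)), (w : Fin n → 𝔽) i0 = 0 :=
              mem_coordSub_iff.mp ((inf_le_right : D ≤ coordSub 𝔽 (Z : Set (Fin n))) hwD)
            rw [SetLike.mem_coe, mem_coordSub_iff] at hw
            push_neg at hw
            obtain ⟨i0, hi0S, hi0ne⟩ := hw
            have hi0Z : i0 ∈ Z := by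
              by_contra h
              exact hi0ne (hwZ i0 (by simpa using h))
            rw [hNZ]
            exact Finset.mem_filter.mpr ⟨Finset.mem_univ _, ⟨i0, hi0Z, hi0S⟩⟩
        have hDrank : Module.finrank 𝔽 D = bfin.card := by
          rw [← hbspan]
          have hcoe : (bfin : Set (Fin n → 𝔽)) = b := hbfin.coe_toFinset
          rw [← hcoe]
          refine finrank_span_finset_eq_card ?_
          have : LinearIndependent 𝔽 (fun x : (bfin : Set (Fin n → 𝔽)) => (x.1 : Fin n → 𝔽)) := by
            rw [hcoe]; exact hbli
          exact this
        omega
      have h3 := Finset.card_le_card hZF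
      omega
    have hsub : (NZ.image Sum.inl ∪ ((Finset.univ : Finset (Fin m)).image Sum.inr))
        ⊆ s.biUnion t := by
      intro y hy
      rcases Finset.mem_union.mp hy with hy | hy
      · obtain ⟨i, hi, rfl⟩ := Finset.mem_image.mp hy
        rw [hNZ, Finset.mem_filter] at hi
        obtain ⟨j'', hj''Z, hj''S⟩ := hi.2
        obtain ⟨x, hxs, rfl⟩ := Finset.mem_image.mp hj''Z
        refine Finset.mem_biUnion.mpr ⟨x, hxs, ?_⟩
        rw [ht]
        exact Finset.mem_union_left _ (Finset.mem_image.mpr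
          ⟨i, Finset.mem_filter.mpr ⟨Finset.mem_univ _, hj''S⟩, rfl⟩)
      · obtain ⟨i, -, rfl⟩ := Finset.mem_image.mp hy
        refine Finset.mem_biUnion.mpr ⟨x₀, hx₀, ?_⟩
        rw [ht]
        exact Finset.mem_union_right _ (Finset.mem_image.mpr ⟨i, Finset.mem_univ _, rfl⟩)
    have hdisj : Disjoint (NZ.image Sum.inl)
        ((Finset.univ : Finset (Fin m)).image (Sum.inr : Fin m → Fin k ⊕ Fin m)) := by
      rw [Finset.disjoint_left]
      rintro a ha hb
      obtain ⟨i, -, rfl⟩ := Finset.mem_image.mp ha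
      obtain ⟨i', -, h⟩ := Finset.mem_image.mp hb
      exact absurd h (by simp)
    have hcard2 : NZ.card + m ≤ (s.biUnion t).card := by
      calc NZ.card + m
          = (NZ.image Sum.inl ∪ ((Finset.univ : Finset (Fin m)).image Sum.inr)).card := by
            rw [Finset.card_union_of_disjoint hdisj,
              Finset.card_image_of_injective _ Sum.inl_injective,
              Finset.card_image_of_injective _ Sum.inr_injective,
              Finset.card_univ, Fintype.card_fin]
        _ ≤ (s.biUnion t).card := Finset.card_le_card hsub
    have hZcard : s.card = Z.card :=
      (Finset.card_image_of_injective _ Subtype.val_injective).symm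
    have h3 := Finset.card_le_card hZF
    omega
  obtain ⟨f, finj, fmem⟩ := (Finset.all_card_le_biUnion_card_iff_exists_injective t).mp hall
  set sL : Finset {x // x ∈ F} := Finset.univ.filter (fun x => (f x).isLeft) with hsL
  set Y : Finset (Fin n) := sL.image Subtype.val with hY
  have hYF : Y ⊆ F := by
    intro a ha; obtain ⟨x, _, rfl⟩ := Finset.mem_image.mp ha; exact x.2
  -- membership data
  have hYmem : ∀ y : {y // y ∈ Y}, ∃ (h : (y : Fin n) ∈ F) (a : Fin k),
      f ⟨(y : Fin n), h⟩ = Sum.inl a := by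
    rintro ⟨y, hy⟩
    obtain ⟨x, hx, rfl⟩ := Finset.mem_image.mp hy
    refine ⟨x.2, ?_⟩
    have hxl : (f x).isLeft := (Finset.mem_filter.mp hx).2
    rcases hfx : f x with a | b
    · exact ⟨a, by rw [← hfx]⟩
    · rw [hfx] at hxl; exact absurd hxl (by simp)
  set g : {y // y ∈ Y} → Fin k := fun y => (hYmem y).choose_spec.choose with hg
  have hgspec : ∀ y : {y // y ∈ Y}, f ⟨(y : Fin n), (hYmem y).choose⟩ = Sum.inl (g y) :=
    fun y => (hYmem y).choose_spec.choose_spec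
  have hginj : Function.Injective g := by
    intro y1 y2 h
    have h1 := hgspec y1
    have h2 := hgspec y2
    rw [h, ← h2] at h1
    have := finj h1
    exact Subtype.ext (Subtype.mk_eq_mk.mp this)
  have hgav : ∀ y : {y // y ∈ Y}, (y : Fin n) ∉ S (g y) := by
    intro y
    have hmem := fmem ⟨(y : Fin n), (hYmem y).choose⟩
    rw [ht, hgspec y] at hmem
    rcases Finset.mem_union.mp hmem with h | h
    · obtain ⟨i, hi, hieq⟩ := Finset.mem_image.mp h
      have : i = g y := Sum.inl_injective hieq
      subst this
      exact (Finset.mem_filter.mp hi).2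
    · obtain ⟨i, -, hieq⟩ := Finset.mem_image.mp h
      exact absurd hieq (by simp)
  -- cardinality
  have hcard : d ≤ Y.card := by
    set sR : Finset {x // x ∈ F} := Finset.univ.filter (fun x => ¬ (f x).isLeft) with hsR
    have hsplit : sL.card + sR.card = F.card := by
      rw [hsL, hsR, Finset.card_filter_add_card_filter_not, Finset.card_univ,
        Fintype.card_coe]
    have hRm : sR.card ≤ m := by
      have hRex : ∀ x : {x // x ∈ sR}, ∃ b : Fin m, f (x : {x // x ∈ F}) = Sum.inr b := by
        rintro ⟨x, hx⟩
        have hxr : ¬ (f x).isLeft := (Finset.mem_filter.mp hx).2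
        rcases hfx : f x with a | b
        · rw [hfx] at hxr; simp at hxr
        · exact ⟨b, rfl⟩
      set ψ : {x // x ∈ sR} → Fin m := fun x => (hRex x).choose with hψ
      have hψspec : ∀ x : {x // x ∈ sR}, f (x : {x // x ∈ F}) = Sum.inr (ψ x) :=
        fun x => (hRex x).choose_spec
      have hle := card_le_of_inj_subtype sR (Finset.univ : Finset (Fin m)) ψ ?_
        (fun _ => Finset.mem_univ _)
      · simpa using hle
      intro x1 x2 h
      have h1 := hψspec x1
      rw [h, ← hψspec x2] at h1
      exact Subtype.ext (finj h1)
    have hYL : Y.card = sL.card := Finset.card_image_of_injective _ Subtype.val_injective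
    omega
  exact ⟨Y, hYF, ⟨g, hginj, hgav⟩, hcard⟩

end Part2
/-- flats of the avoidance transversal matroid map to flats of the
corresponding transversal q-matroid. -/
theorem stmt7 {𝔽 : Type*} [Field 𝔽] [Fintype 𝔽] {n k : ℕ} [DecidableEq (Fin n)]
    (S : Fin k → Set (Fin n)) (F : Finset (Fin n))
    (hflat : ∀ j ∉ F, atRank S F < atRank S (insert j F)) :
    ∀ v : Fin n → 𝔽, v ∉ coordSub 𝔽 (F : Set (Fin n)) →
      qtRank (fun i => coordSub 𝔽 (S i)) (coordSub 𝔽 (F : Set (Fin n)))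
        < qtRank (fun i => coordSub 𝔽 (S i))
            (coordSub 𝔽 (F : Set (Fin n)) ⊔ span 𝔽 {v}) := by
  classical
  intro v hv
  have hvs : ∃ j, j ∉ F ∧ v j ≠ 0 := by
    rw [mem_coordSub_iff] at hv
    push_neg at hv
    obtain ⟨j, hj1, hj2⟩ := hv
    exact ⟨j, by simpa using hj1, hj2⟩
  obtain ⟨j, hjF, hvj⟩ := hvs
  have hlt := hflat j hjF
  set A1 := {m | ∃ Y : Finset (Fin n), Y ⊆ F ∧ AvoidsT S Y ∧ Y.card = m} with hA1
  set A2 := {m | ∃ Y : Finset (Fin n), Y ⊆ insert j F ∧ AvoidsT S Y ∧ Y.card = m} with hA2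
  have hA2ne : A2.Nonempty := ⟨0, ∅, Finset.empty_subset _, avoidsT_empty _, rfl⟩
  have hA2bdd : BddAbove A2 :=
    ⟨(insert j F).card, by rintro m ⟨Y, hY, -, rfl⟩; exact Finset.card_le_card hY⟩
  have hA1bdd : BddAbove A1 :=
    ⟨F.card, by rintro m ⟨Y, hY, -, rfl⟩; exact Finset.card_le_card hY⟩
  set r := atRank S F with hr
  have hsup2 : atRank S (insert j F) = sSup A2 := rfl
  have hsup1 : r = sSup A1 := rfl
  obtain ⟨Y₀, hY₀sub, hY₀av, hY₀card⟩ := Nat.sSup_mem hA2ne hA2bdd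
  have hY₀r : r < Y₀.card := by rw [hY₀card, ← hsup2]; exact hlt
  have hjY₀ : j ∈ Y₀ := by
    by_contra hj
    have hY₀F : Y₀ ⊆ F := by
      intro x hx
      rcases Finset.mem_insert.mp (hY₀sub hx) with rfl | h
      · exact absurd hx hj
      · exact h
    have : Y₀.card ≤ r := by
      rw [hsup1]
      exact le_csSup hA1bdd ⟨Y₀, hY₀F, hY₀av, rfl⟩
    omega
  set Y' := Y₀.erase j with hY'
  have hjY' : j ∉ Y' := Finset.notMem_erase _ _
  have hY₀eq : insert j Y' = Y₀ := Finset.insert_erase hjY₀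
  have hY'F : Y' ⊆ F := by
    intro x hx
    rcases Finset.mem_insert.mp (hY₀sub (Finset.erase_subset _ _ hx)) with rfl | h
    · exact absurd rfl (Finset.ne_of_mem_erase hx)
    · exact h
  have hWpqt := isPQT_sup S hjY' (by rw [hY₀eq]; exact hY₀av) v hvj
  set W := coordSub 𝔽 (Y' : Set (Fin n)) ⊔ span 𝔽 {v} with hWdef
  have hvY' : v ∉ coordSub 𝔽 (Y' : Set (Fin n)) :=
    fun h => hv (coordSub_mono (by exact_mod_cast hY'F) h)
  have hvne : v ≠ 0 := fun h => hvj (by rw [h]; rfl)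
  have hinfbot : coordSub 𝔽 (Y' : Set (Fin n)) ⊓ span 𝔽 {v} = ⊥ := by
    rw [eq_bot_iff]
    intro w hw
    obtain ⟨h1, h2⟩ := Submodule.mem_inf.mp hw
    obtain ⟨c, rfl⟩ := mem_span_singleton.mp h2
    rcases eq_or_ne c 0 with rfl | hc
    · simp
    · exact absurd (by
        have : v = c⁻¹ • (c • v) := by rw [smul_smul, inv_mul_cancel₀ hc, one_smul]
        rw [this]
        exact smul_mem _ _ h1) hvY'
  have hWrank : Module.finrank 𝔽 W = Y'.card + 1 := by
    have heq := Submodule.finrank_sup_add_finrank_inf_eq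
      (coordSub 𝔽 (Y' : Set (Fin n))) (span 𝔽 {v})
    rw [hinfbot, finrank_coordSub, finrank_span_singleton hvne, finrank_bot 𝔽 (Fin n → 𝔽)] at heq
    rw [hWdef]
    omega
  have hQ2 : Y'.card + 1 ≤ qtRank (fun i => coordSub 𝔽 (S i))
      (coordSub 𝔽 (F : Set (Fin n)) ⊔ span 𝔽 {v}) := by
    have hWle : W ≤ coordSub 𝔽 (F : Set (Fin n)) ⊔ span 𝔽 {v} :=
      sup_le_sup_right (coordSub_mono (by exact_mod_cast hY'F)) _
    have hbdd : BddAbove {d | ∃ U : Submodule 𝔽 (Fin n → 𝔽),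
        U ≤ coordSub 𝔽 (F : Set (Fin n)) ⊔ span 𝔽 {v} ∧
        IsPartialQT (fun i => coordSub 𝔽 (S i)) U ∧ Module.finrank 𝔽 U = d} := by
      refine ⟨n, ?_⟩
      rintro d ⟨U, -, -, rfl⟩
      calc Module.finrank 𝔽 U ≤ Module.finrank 𝔽 (Fin n → 𝔽) := Submodule.finrank_le U
        _ = n := Module.finrank_fin_fun 𝔽
    exact le_csSup hbdd ⟨W, hWle, hWpqt, hWrank⟩
  have hQ1 : qtRank (fun i => coordSub 𝔽 (S i)) (coordSub 𝔽 (F : Set (Fin n))) ≤ r := by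
    apply csSup_le
    · exact ⟨0, ⊥, bot_le, isPartialQT_bot _, finrank_bot 𝔽 (Fin n → 𝔽)⟩
    · rintro d ⟨U, hUle, hUPQT, rfl⟩
      obtain ⟨Y, hYF, hYav, hYcard⟩ := exists_avoid_of_PQT S F U hUle hUPQT
      calc Module.finrank 𝔽 U ≤ Y.card := hYcard
        _ ≤ r := by rw [hsup1]; exact le_csSup hA1bdd ⟨Y, hYF, hYav, rfl⟩
  have hY₀c : Y₀.card = Y'.card + 1 := by
    rw [← hY₀eq, Finset.card_insert_of_notMem hjY']
  calc qtRank (fun i => coordSub 𝔽 (S i)) (coordSub 𝔽 (F : Set (Fin n))) ≤ r := hQ1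
    _ < Y'.card + 1 := by omega
    _ ≤ _ := hQ2
end

section
/- Every nested matroid is an avoidance transversal matroid. Concretely: if M is a matroid on [n] whose lattice of cyclic flats is a chain Z_0 ⊊ Z_1 ⊊ ⋯ ⊊ Z_m with ranks r_0 < r_1 < ⋯ < r_m, then M is transversal, with a presentation obtainable from the chain of cyclic flats. -/
open Submodule

namespace Stmt17Aux

variable {n : ℕ} {r : Finset (Fin n) → ℕ}

/-- Cyclic flat predicate, matching the statement. -/
def CF (r : Finset (Fin n) → ℕ) (Z : Finset (Fin n)) : Prop :=
  (∀ j ∉ Z, r Z < r (insert j Z)) ∧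
    ∀ z ∈ Z, ∃ C ⊆ Z, z ∈ C ∧ r C < C.card ∧
      ∀ x ∈ C, r (C.erase x) = (C.erase x).card

/-- Circuit predicate. -/
def IsCirc (r : Finset (Fin n) → ℕ) (C : Finset (Fin n)) : Prop :=
  r C < C.card ∧ ∀ x ∈ C, r (C.erase x) = (C.erase x).card

theorem indep_subset (hrcard : ∀ X, r X ≤ X.card)
    (hrsub : ∀ X Y, r (X ∪ Y) + r (X ∩ Y) ≤ r X + r Y)
    {X Y : Finset (Fin n)} (hXY : X ⊆ Y) (hY : r Y = Y.card) :
    r X = X.card := by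
  have h := hrsub X (Y \ X)
  rw [Finset.union_sdiff_of_subset hXY] at h
  have h2 : r (Y \ X) ≤ (Y \ X).card := hrcard _
  have h3 : (Y \ X).card = Y.card - X.card := Finset.card_sdiff_of_subset hXY
  have h4 : X.card ≤ Y.card := Finset.card_le_card hXY
  have h5 : X.card ≤ r X := by omega
  exact le_antisymm (hrcard X) h5

theorem rank_insert_le (hrcard : ∀ X, r X ≤ X.card)
    (hrsub : ∀ X Y, r (X ∪ Y) + r (X ∩ Y) ≤ r X + r Y)
    (X : Finset (Fin n)) (j : Fin n) :
    r (insert j X) ≤ r X + 1 := by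
  have h := hrsub X {j}
  have h1 : X ∪ {j} = insert j X := by
    ext x; simp [Finset.mem_insert, or_comm]
  have h2 : r {j} ≤ 1 := le_trans (hrcard _) (by simp)
  rw [h1] at h
  omega

theorem rank_union_eq
    (hrmono : ∀ X Y, X ⊆ Y → r X ≤ r Y)
    (hrsub : ∀ X Y, r (X ∪ Y) + r (X ∩ Y) ≤ r X + r Y)
    {X S : Finset (Fin n)}
    (h : ∀ s ∈ S, r (insert s X) = r X) : r (X ∪ S) = r X := by
  classical
  induction S using Finset.induction_on with
  | empty => simp
  | @insert a S' ha ih =>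
    have ihS : r (X ∪ S') = r X := ih fun s hs => h s (Finset.mem_insert_of_mem hs)
    have hsub := hrsub (X ∪ S') (insert a X)
    have hu : (X ∪ S') ∪ insert a X = X ∪ insert a S' := by
      ext x; simp [Finset.mem_union, Finset.mem_insert]; tauto
    have hX : X ⊆ (X ∪ S') ∩ insert a X := by
      intro x hx
      simp [Finset.mem_inter, Finset.mem_union, Finset.mem_insert, hx]
    have h1 : r X ≤ r ((X ∪ S') ∩ insert a X) := hrmono _ _ hX
    have h2 : r (insert a X) = r X := h a (Finset.mem_insert_self _ _)
    rw [hu, ihS, h2] at hsub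
    have h3 : r X ≤ r (X ∪ insert a S') := hrmono _ _ Finset.subset_union_left
    omega



variable {n : ℕ} {r : Finset (Fin n) → ℕ}

/-- Closure of a set: elements not increasing the rank. -/
def clo (r : Finset (Fin n) → ℕ) (X : Finset (Fin n)) : Finset (Fin n) :=
  Finset.univ.filter (fun j => r (insert j X) = r X)

theorem subset_clo (X : Finset (Fin n)) : X ⊆ clo r X := by
  intro j hj
  simp only [clo, Finset.mem_filter, Finset.mem_univ, true_and]
  rw [Finset.insert_eq_self.mpr hj]

theorem rank_clo
    (hrmono : ∀ X Y, X ⊆ Y → r X ≤ r Y)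
    (hrsub : ∀ X Y, r (X ∪ Y) + r (X ∩ Y) ≤ r X + r Y)
    (X : Finset (Fin n)) : r (clo r X) = r X := by
  have h : r (X ∪ clo r X) = r X := by
    apply rank_union_eq hrmono hrsub
    intro s hs
    simpa [clo] using hs
  rwa [Finset.union_eq_right.mpr (subset_clo X)] at h

theorem clo_flat (hrcard : ∀ X, r X ≤ X.card)
    (hrmono : ∀ X Y, X ⊆ Y → r X ≤ r Y)
    (hrsub : ∀ X Y, r (X ∪ Y) + r (X ∩ Y) ≤ r X + r Y)
    (X : Finset (Fin n)) : ∀ j ∉ clo r X, r (clo r X) < r (insert j (clo r X)) := by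
  intro j hj
  have hne : r (insert j X) ≠ r X := by simpa [clo] using hj
  have hle : r X ≤ r (insert j X) := hrmono _ _ (Finset.subset_insert _ _)
  have h1 : r (insert j X) ≤ r (insert j (clo r X)) :=
    hrmono _ _ (Finset.insert_subset_insert _ (subset_clo X))
  rw [rank_clo hrmono hrsub]
  omega

/-- Every dependent set contains a circuit. -/
theorem exists_circuit (hrcard : ∀ X, r X ≤ X.card) :
    ∀ X : Finset (Fin n), r X < X.card → ∃ C ⊆ X, IsCirc r C := by
  classical
  intro X
  induction X using Finset.strongInduction with
  | _ X ih =>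
    intro hX
    by_cases h : ∀ x ∈ X, r (X.erase x) = (X.erase x).card
    · exact ⟨X, Finset.Subset.refl X, hX, h⟩
    · push_neg at h
      obtain ⟨x, hx, hxe⟩ := h
      have hdep : r (X.erase x) < (X.erase x).card :=
        lt_of_le_of_ne (hrcard _) hxe
      obtain ⟨C, hC, hcirc⟩ := ih (X.erase x) (Finset.erase_ssubset hx) hdep
      exact ⟨C, hC.trans (Finset.erase_subset _ _), hcirc⟩

theorem circ_card (hrcard : ∀ X, r X ≤ X.card)
    (hrmono : ∀ X Y, X ⊆ Y → r X ≤ r Y)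
    {C : Finset (Fin n)} (hC : IsCirc r C) : C.card = r C + 1 := by
  obtain ⟨hdep, herase⟩ := hC
  have hne : C.Nonempty := Finset.card_pos.mp (by omega)
  obtain ⟨x, hx⟩ := hne
  have h1 : r (C.erase x) ≤ r C := hrmono _ _ (Finset.erase_subset _ _)
  have h2 := herase x hx
  have h3 : (C.erase x).card = C.card - 1 := Finset.card_erase_of_mem hx
  have h4 : 1 ≤ C.card := Finset.card_pos.mpr ⟨x, hx⟩
  omega

/-- A maximal independent subset of `Y` spans `Y`. -/
theorem exists_basis (hr0 : r ∅ = 0) (hrcard : ∀ X, r X ≤ X.card)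
    (hrmono : ∀ X Y, X ⊆ Y → r X ≤ r Y)
    (hrsub : ∀ X Y, r (X ∪ Y) + r (X ∩ Y) ≤ r X + r Y)
    (Y : Finset (Fin n)) :
    ∃ B ⊆ Y, r B = B.card ∧ r B = r Y := by
  classical
  set T := Y.powerset.filter (fun B => r B = B.card) with hT
  have hTne : T.Nonempty := ⟨∅, by simp [hT, hr0]⟩
  obtain ⟨B, hBT, hBmax⟩ := T.exists_maximal hTne
  simp only [hT, Finset.mem_filter, Finset.mem_powerset] at hBT
  obtain ⟨hBY, hBind⟩ := hBT
  refine ⟨B, hBY, hBind, ?_⟩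
  have key : ∀ s ∈ Y, r (insert s B) = r B := by
    intro s hs
    by_cases hsB : s ∈ B
    · rw [Finset.insert_eq_self.mpr hsB]
    · have hmem : insert s B ∉ T ∨ ¬ B < insert s B := by
        by_cases hm : insert s B ∈ T
        · exact Or.inr (fun hlt => lt_irrefl _ (lt_of_lt_of_le hlt (hBmax hm hlt.le)))
        · exact Or.inl hm
      have hnind : r (insert s B) ≠ (insert s B).card := by
        rcases hmem with hm | hm
        · intro he
          exact hm (by simp [hT, Finset.mem_filter, Finset.mem_powerset, he,
              Finset.insert_subset_iff, hs, hBY])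
        · exact absurd (Finset.ssubset_insert hsB) hm
      have h1 : r (insert s B) ≤ (insert s B).card := hrcard _
      have h2 : (insert s B).card = B.card + 1 := Finset.card_insert_of_notMem hsB
      have h3 : r B ≤ r (insert s B) := hrmono _ _ (Finset.subset_insert _ _)
      omega
  have h4 : r (B ∪ Y) = r B := rank_union_eq hrmono hrsub key
  have h5 : r Y ≤ r (B ∪ Y) := hrmono _ _ Finset.subset_union_right
  have h6 : r B ≤ r Y := hrmono _ _ hBY
  omega

/-- The closure of a circuit is a cyclic flat. -/
theorem clo_circuit_cf (hr0 : r ∅ = 0) (hrcard : ∀ X, r X ≤ X.card)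
    (hrmono : ∀ X Y, X ⊆ Y → r X ≤ r Y)
    (hrsub : ∀ X Y, r (X ∪ Y) + r (X ∩ Y) ≤ r X + r Y)
    {C : Finset (Fin n)} (hC : IsCirc r C) : CF r (clo r C) := by
  classical
  constructor
  · exact clo_flat hrcard hrmono hrsub C
  · intro z hz
    by_cases hzC : z ∈ C
    · exact ⟨C, subset_clo C, hzC, hC.1, hC.2⟩
    · -- z ∈ clo C \ C
      have hzcl : r (insert z C) = r C := by simpa [clo] using hz
      obtain ⟨B, hBC, hBind, hBr⟩ := exists_basis hr0 hrcard hrmono hrsub C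
      have hzB : z ∉ B := fun h => hzC (hBC h)
      have hdep : r (insert z B) < (insert z B).card := by
        have h1 : r (insert z B) ≤ r (insert z C) :=
          hrmono _ _ (Finset.insert_subset_insert _ hBC)
        have h2 : (insert z B).card = B.card + 1 := Finset.card_insert_of_notMem hzB
        rw [hzcl] at h1
        omega
      obtain ⟨C', hC'B, hC'circ⟩ := exists_circuit hrcard _ hdep
      have hzC' : z ∈ C' := by
        by_contra hzc
        have hsub : C' ⊆ B := fun x hx => by
          rcases Finset.mem_insert.mp (hC'B hx) with h | h
          · exact absurd (h ▸ hx) hzc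
          · exact h
        have h := indep_subset hrcard hrsub hsub hBind
        exact absurd h (Nat.ne_of_lt hC'circ.1)
      refine ⟨C', ?_, hzC', hC'circ.1, hC'circ.2⟩
      intro x hx
      rcases Finset.mem_insert.mp (hC'B hx) with h | h
      · exact h ▸ hz
      · exact subset_clo C (hBC h)



/-- Independence is equivalent to the cyclic-flat counting conditions. -/
theorem indep_iff_cf (hr0 : r ∅ = 0) (hrcard : ∀ X, r X ≤ X.card)
    (hrmono : ∀ X Y, X ⊆ Y → r X ≤ r Y)
    (hrsub : ∀ X Y, r (X ∪ Y) + r (X ∩ Y) ≤ r X + r Y)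
    (X : Finset (Fin n)) :
    r X = X.card ↔ ∀ Z, CF r Z → (X ∩ Z).card ≤ r Z := by
  classical
  constructor
  · intro hX Z _
    have h1 : r (X ∩ Z) = (X ∩ Z).card :=
      indep_subset hrcard hrsub Finset.inter_subset_left hX
    calc (X ∩ Z).card = r (X ∩ Z) := h1.symm
      _ ≤ r Z := hrmono _ _ Finset.inter_subset_right
  · intro h
    by_contra hX
    have hdep : r X < X.card := lt_of_le_of_ne (hrcard X) hX
    obtain ⟨C, hCX, hCcirc⟩ := exists_circuit hrcard X hdep
    have hcf : CF r (clo r C) := clo_circuit_cf hr0 hrcard hrmono hrsub hCcirc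
    have hrc : r (clo r C) = r C := rank_clo hrmono hrsub C
    have hsub : C ⊆ X ∩ clo r C :=
      Finset.subset_inter hCX (subset_clo C)
    have h1 : C.card ≤ (X ∩ clo r C).card := Finset.card_le_card hsub
    have h2 : C.card = r C + 1 := circ_card hrcard hrmono hCcirc
    have := h _ hcf
    omega

/-- Hall-type injection for nested constraints. -/
theorem exists_inj_lt {X : Finset (Fin n)} {L : Fin n → ℕ}
    (hLn : ∀ x ∈ X, L x ≤ n)
    (hcount : ∀ t, (X.filter (fun x => L x ≤ t)).card ≤ t) :
    ∃ f : {x // x ∈ X} → Fin n, Function.Injective f ∧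
      ∀ x : {x // x ∈ X}, (f x : ℕ) < L (x : Fin n) := by
  classical
  set t : {x // x ∈ X} → Finset (Fin n) :=
    fun x => Finset.univ.filter (fun i => (i : ℕ) < L (x : Fin n)) with ht
  have hcardt : ∀ x : {x // x ∈ X}, L (x : Fin n) ≤ (t x).card := by
    intro x
    have hb : ∀ m ∈ Finset.range (L (x : Fin n)), m < n :=
      fun m hm => lt_of_lt_of_le (Finset.mem_range.mp hm) (hLn _ x.2)
    have hcardeq := Finset.card_attachFin (Finset.range (L (x : Fin n))) hb
    rw [Finset.card_range] at hcardeq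
    rw [← hcardeq]
    apply Finset.card_le_card
    intro i hi
    rw [Finset.mem_attachFin, Finset.mem_range] at hi
    simp only [ht, Finset.mem_filter, Finset.mem_univ, true_and]
    exact hi
  have hall : ∀ s : Finset {x // x ∈ X}, s.card ≤ (s.biUnion t).card := by
    intro s
    rcases s.eq_empty_or_nonempty with rfl | hs
    · simp
    obtain ⟨x₀, hx₀, hmax⟩ := s.exists_max_image (fun x => L (x : Fin n)) hs
    have h1 : s.card ≤ (X.filter (fun x => L x ≤ L (x₀ : Fin n))).card := by
      refine Finset.card_le_card_of_injOn (fun x => (x : Fin n)) ?_ ?_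
      · intro a ha
        simp only [Finset.mem_filter]
        exact Finset.mem_filter.mpr ⟨a.2, hmax a ha⟩
      · intro a _ b _ hab
        exact Subtype.ext hab
    have h2 : (X.filter (fun x => L x ≤ L (x₀ : Fin n))).card ≤ L (x₀ : Fin n) :=
      hcount _
    have h3 : t x₀ ⊆ s.biUnion t := Finset.subset_biUnion_of_mem t hx₀
    have h4 : (t x₀).card ≤ (s.biUnion t).card := Finset.card_le_card h3
    have h5 := hcardt x₀
    omega
  obtain ⟨f, hfinj, hft⟩ := (Finset.all_card_le_biUnion_card_iff_exists_injective t).mp hall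
  refine ⟨f, hfinj, fun x => ?_⟩
  have := hft x
  simpa [ht] using this


open scoped Classical in
/-- Chain counting: the union of all cyclic flats of rank at most `t` meets any
set satisfying the cyclic-flat bounds in at most `t` elements. -/
theorem count_le
    (hnested : IsChain (· ⊆ ·) {Z : Finset (Fin n) | CF r Z})
    {X : Finset (Fin n)} (hX : ∀ Z, CF r Z → (X ∩ Z).card ≤ r Z) (t : ℕ) :
    (X.filter (fun x => ∃ Z, CF r Z ∧ r Z ≤ t ∧ x ∈ Z)).card ≤ t := by
  classical
  set T : Finset (Finset (Fin n)) :=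
    Finset.univ.filter (fun Z => CF r Z ∧ r Z ≤ t) with hT
  rcases T.eq_empty_or_nonempty with hTe | hTne
  · have : X.filter (fun x => ∃ Z, CF r Z ∧ r Z ≤ t ∧ x ∈ Z) = ∅ := by
      rw [Finset.filter_eq_empty_iff]
      rintro x _ ⟨Z, h1, h2, _⟩
      have : Z ∈ T := by simp [hT, h1, h2]
      rw [hTe] at this
      exact absurd this (Finset.notMem_empty Z)
    simp [this]
  · obtain ⟨Zm, hZmT, hZmax⟩ := T.exists_maximal hTne
    simp only [hT, Finset.mem_filter, Finset.mem_univ, true_and] at hZmT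
    have hsub : X.filter (fun x => ∃ Z, CF r Z ∧ r Z ≤ t ∧ x ∈ Z) ⊆ X ∩ Zm := by
      intro x hx
      simp only [Finset.mem_filter] at hx
      obtain ⟨hxX, Z, h1, h2, h3⟩ := hx
      have hZT : Z ∈ T := by simp [hT, h1, h2]
      rcases eq_or_ne Z Zm with rfl | hne
      · exact Finset.mem_inter.mpr ⟨hxX, h3⟩
      · rcases hnested h1 hZmT.1 hne with h | h
        · exact Finset.mem_inter.mpr ⟨hxX, h h3⟩
        · exact absurd (Finset.ssubset_iff_subset_ne.mpr ⟨h, Ne.symm hne⟩)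
            (fun hlt => have hlt' : Zm < Z := Finset.lt_iff_ssubset.mpr hlt; lt_irrefl _ (lt_of_lt_of_le hlt' (hZmax hZT hlt'.le)))
    calc (X.filter (fun x => ∃ Z, CF r Z ∧ r Z ≤ t ∧ x ∈ Z)).card
        ≤ (X ∩ Zm).card := Finset.card_le_card hsub
      _ ≤ r Zm := hX Zm hZmT.1
      _ ≤ t := hZmT.2

end Stmt17Aux

/-- every nested matroid (a matroid whose cyclic flats form a chain)
is an avoidance transversal matroid: there is a family of subsets such that the
independent sets are precisely the sets admitting an avoidance transversal of it. -/
theorem stmt17 {n : ℕ} (r : Finset (Fin n) → ℕ)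
    (hr0 : r ∅ = 0)
    (hrcard : ∀ X, r X ≤ X.card)
    (hrmono : ∀ X Y, X ⊆ Y → r X ≤ r Y)
    (hrsub : ∀ X Y, r (X ∪ Y) + r (X ∩ Y) ≤ r X + r Y)
    (hnested : IsChain (· ⊆ ·)
      {Z : Finset (Fin n) |
        (∀ j ∉ Z, r Z < r (insert j Z)) ∧
        ∀ z ∈ Z, ∃ C ⊆ Z, z ∈ C ∧ r C < C.card ∧
          ∀ x ∈ C, r (C.erase x) = (C.erase x).card}) :
    ∃ (k : ℕ) (A : Fin k → Set (Fin n)),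
      ∀ X : Finset (Fin n), r X = X.card ↔ AvoidsT A X := by
  classical
  refine ⟨n, fun t => {x | ∃ Z, Stmt17Aux.CF r Z ∧ r Z ≤ (t : ℕ) ∧ x ∈ Z}, ?_⟩
  intro X
  rw [Stmt17Aux.indep_iff_cf hr0 hrcard hrmono hrsub]
  constructor
  · intro hX
    set L : Fin n → ℕ := fun x =>
      if h : ∃ Z, Stmt17Aux.CF r Z ∧ x ∈ Z then
        sInf {m | ∃ Z, Stmt17Aux.CF r Z ∧ x ∈ Z ∧ r Z = m} else n with hL
    have hcardn : ∀ Z : Finset (Fin n), Z.card ≤ n := by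
      intro Z
      calc Z.card ≤ (Finset.univ : Finset (Fin n)).card := Finset.card_le_univ Z
        _ = n := by simp
    have hLn : ∀ x ∈ X, L x ≤ n := by
      intro x _
      simp only [hL]
      split
      · rename_i h
        obtain ⟨Z, hZ, hxZ⟩ := h
        calc sInf {m | ∃ Z, Stmt17Aux.CF r Z ∧ x ∈ Z ∧ r Z = m} ≤ r Z :=
              Nat.sInf_le ⟨Z, hZ, hxZ, rfl⟩
          _ ≤ Z.card := hrcard Z
          _ ≤ n := hcardn Z
      · exact le_refl n
    have hkey : ∀ (x : Fin n) (t : ℕ), (∃ Z, Stmt17Aux.CF r Z ∧ r Z ≤ t ∧ x ∈ Z) → L x ≤ t := by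
      rintro x t ⟨Z, hZ, hZt, hxZ⟩
      simp only [hL]
      rw [dif_pos ⟨Z, hZ, hxZ⟩]
      exact le_trans (Nat.sInf_le ⟨Z, hZ, hxZ, rfl⟩) hZt
    have hcount : ∀ t, (X.filter (fun x => L x ≤ t)).card ≤ t := by
      intro t
      by_cases htn : n ≤ t
      · calc (X.filter (fun x => L x ≤ t)).card ≤ X.card :=
              Finset.card_le_card (Finset.filter_subset _ _)
          _ ≤ n := hcardn X
          _ ≤ t := htn
      · push_neg at htn
        have hsub : X.filter (fun x => L x ≤ t) ⊆
            X.filter (fun x => ∃ Z, Stmt17Aux.CF r Z ∧ r Z ≤ t ∧ x ∈ Z) := by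
          intro x hx
          rw [Finset.mem_filter] at hx ⊢
          refine ⟨hx.1, ?_⟩
          have hLx := hx.2
          simp only [hL] at hLx
          by_cases h : ∃ Z, Stmt17Aux.CF r Z ∧ x ∈ Z
          · rw [dif_pos h] at hLx
            have hne : {m | ∃ Z, Stmt17Aux.CF r Z ∧ x ∈ Z ∧ r Z = m}.Nonempty := by
              obtain ⟨Z, hZ, hxZ⟩ := h
              exact ⟨r Z, Z, hZ, hxZ, rfl⟩
            obtain ⟨Z, hZ, hxZ, hm⟩ := Nat.sInf_mem hne
            exact ⟨Z, hZ, by omega, hxZ⟩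
          · rw [dif_neg h] at hLx
            omega
        exact le_trans (Finset.card_le_card hsub) (Stmt17Aux.count_le hnested hX t)
    obtain ⟨f, hinj, hlt⟩ := Stmt17Aux.exists_inj_lt hLn hcount
    refine ⟨f, hinj, ?_⟩
    intro x hx
    simp only [Set.mem_setOf_eq] at hx
    exact absurd (hkey _ _ hx) (by have := hlt x; omega)
  · rintro ⟨f, hinj, havoid⟩ Z hZ
    set g : Fin n → ℕ := fun y => if h : y ∈ X then (f ⟨y, h⟩ : ℕ) else 0 with hg
    have hmaps : ∀ y ∈ X ∩ Z, g y ∈ Finset.range (r Z) := by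
      intro y hy
      rw [Finset.mem_inter] at hy
      simp only [hg]
      rw [dif_pos hy.1, Finset.mem_range]
      by_contra hc
      push_neg at hc
      exact havoid ⟨y, hy.1⟩ ⟨Z, hZ, hc, hy.2⟩
    have hinjOn : Set.InjOn g (X ∩ Z : Finset (Fin n)) := by
      intro a ha b hb hab
      rw [Finset.coe_inter, Set.mem_inter_iff] at ha hb
      have haX : a ∈ X := by simpa using ha.1
      have hbX : b ∈ X := by simpa using hb.1
      simp only [hg, dif_pos haX, dif_pos hbX] at hab
      have : (⟨a, haX⟩ : {x // x ∈ X}) = ⟨b, hbX⟩ := hinj (Fin.ext hab)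
      exact congrArg Subtype.val this
    calc (X ∩ Z).card ≤ (Finset.range (r Z)).card :=
          Finset.card_le_card_of_injOn g hmaps hinjOn
      _ = r Z := Finset.card_range _
end
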